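/- For smooth compactly supported vector fields F, G, K, B : ℝ³ → ℝ³ and a smooth strictly positive function n : ℝ³ → ℝ, the cyclic sum over (F, G, K) of ∫_{ℝ³} (1/n²) [ −(B · (F × G)) (div K) + (1/2) B · (K × curl(F × G)) + (1/2) (F × G) · curl(B × K) ] dx equals −∫_{ℝ³} (1/n²) (div B) (K · (F × G)) dx. -/

import Mathlib

open scoped BigOperators
open MeasureTheory

noncomputable section

/-- Vectors in ℝ³. -/
abbrev V3 : Type := Fin 3 → ℝ

/-- Euclidean inner product on ℝ³. -/
def dot3 (a b : V3) : ℝ := ∑ i, a i * b i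

/-- Cross product on ℝ³. -/
def cross3 (a b : V3) : V3 := crossProduct a b

/-- Partial derivative in direction `i`. -/
def pd (i : Fin 3) (f : V3 → ℝ) (x : V3) : ℝ := fderiv ℝ f x (Pi.single i 1)

/-- Gradient on ℝ³. -/
def grad3 (f : V3 → ℝ) (x : V3) : V3 := fun i => pd i f x

/-- Divergence of a vector field on ℝ³. -/
def div3 (X : V3 → V3) (x : V3) : ℝ := ∑ i, pd i (fun y => X y i) x

/-- Curl of a vector field on ℝ³. -/
def curl3 (X : V3 → V3) (x : V3) : V3 :=
  ![pd 1 (fun y => X y 2) x - pd 2 (fun y => X y 1) x,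
    pd 2 (fun y => X y 0) x - pd 0 (fun y => X y 2) x,
    pd 0 (fun y => X y 1) x - pd 1 (fun y => X y 0) x]

/-- Gradient in the position variable of a phase-space function. -/
def gradx (f : V3 × V3 → ℝ) (p : V3 × V3) : V3 :=
  fun i => fderiv ℝ f p (Pi.single i 1, 0)

/-- Gradient in the velocity (or momentum) variable of a phase-space function. -/
def gradv (f : V3 × V3 → ℝ) (p : V3 × V3) : V3 :=
  fun i => fderiv ℝ f p (0, Pi.single i 1)

/-- Canonical phase-space bracket `∇ₓf · ∇ᵥg − ∇ᵥf · ∇ₓg`. -/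
def pb (f g : V3 × V3 → ℝ) (p : V3 × V3) : ℝ :=
  dot3 (gradx f p) (gradv g p) - dot3 (gradv f p) (gradx g p)

/-- Magnetized bracket `{f,g} = ∇ₓf·∇ᵥg − ∇ᵥf·∇ₓg + B(x)·(∇ᵥf × ∇ᵥg)`. -/
def mb (B : V3 → V3) (f g : V3 × V3 → ℝ) (p : V3 × V3) : ℝ :=
  pb f g p + dot3 (B p.1) (cross3 (gradv f p) (gradv g p))

/-- The 'fourth term' (fffB/n²) integral of the xvB Jacobi proof. -/
def S16 (n : V3 → ℝ) (B F G K : V3 → V3) : ℝ :=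
  ∫ x, (1 / (n x) ^ 2) *
    (-(dot3 (B x) (cross3 (F x) (G x))) * div3 K x
      + (1 / 2) * dot3 (B x) (cross3 (K x) (curl3 (fun y => cross3 (F y) (G y)) x))
      + (1 / 2) * dot3 (cross3 (F x) (G x)) (curl3 (fun y => cross3 (B y) (K y)) x))

section FourthTermAux

lemma cross3_0 (a b : V3) : cross3 a b 0 = a 1 * b 2 - a 2 * b 1 := by
  simp [cross3, cross_apply]
lemma cross3_1 (a b : V3) : cross3 a b 1 = a 2 * b 0 - a 0 * b 2 := by
  simp [cross3, cross_apply]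
lemma cross3_2 (a b : V3) : cross3 a b 2 = a 0 * b 1 - a 1 * b 0 := by
  simp [cross3, cross_apply]
lemma dot3_expand (a b : V3) : dot3 a b = a 0 * b 0 + a 1 * b 1 + a 2 * b 2 := by
  simp [dot3, Fin.sum_univ_three]

section pdlemmas
variable {f g : V3 → ℝ} {x : V3} {i : Fin 3}
lemma pd_add (hf : DifferentiableAt ℝ f x) (hg : DifferentiableAt ℝ g x) :
    pd i (fun y => f y + g y) x = pd i f x + pd i g x := by
  simp [pd, fderiv_fun_add hf hg]
lemma pd_sub (hf : DifferentiableAt ℝ f x) (hg : DifferentiableAt ℝ g x) :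
    pd i (fun y => f y - g y) x = pd i f x - pd i g x := by
  simp [pd, fderiv_fun_sub hf hg]
lemma pd_mul (hf : DifferentiableAt ℝ f x) (hg : DifferentiableAt ℝ g x) :
    pd i (fun y => f y * g y) x = f x * pd i g x + pd i f x * g x := by
  simp [pd, fderiv_fun_mul hf hg, mul_comm]
lemma pd_neg : pd i (fun y => -f y) x = -pd i f x := by
  simp [pd, fderiv_neg]
lemma pd_const (c : ℝ) : pd i (fun _ => c) x = 0 := by
  simp [pd]

lemma pd_zero_of_nmem_tsupport (h : x ∉ tsupport f) : pd i f x = 0 := by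
  simp [pd, fderiv_of_notMem_tsupport ℝ h]

@[fun_prop]
lemma pd_continuous (i : Fin 3) (f : V3 → ℝ) (hf : ContDiff ℝ (⊤ : ℕ∞) f) :
    Continuous (pd i f) :=
  (hf.continuous_fderiv_apply (by simp)).comp (continuous_id.prodMk continuous_const)
end pdlemmas

/-- vanishing of `pd` outside the support of a controlling function -/
lemma pd_zero_of_base {f : V3 → ℝ} {B : V3 → V3} (h : ∀ y, B y = 0 → f y = 0)
    {x : V3} (hx : x ∉ tsupport B) (i : Fin 3) : pd i f x = 0 := by
  apply pd_zero_of_nmem_tsupport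
  intro hmem
  exact hx (closure_mono (fun y hy => by
    simp only [Function.mem_support] at hy ⊢
    exact fun h0 => hy (h y h0)) hmem)

def itg (m : V3 → ℝ) (B F G K : V3 → V3) (x : V3) : ℝ :=
  m x * (-(dot3 (B x) (cross3 (F x) (G x))) * div3 K x
      + (1 / 2) * dot3 (B x) (cross3 (K x) (curl3 (fun y => cross3 (F y) (G y)) x))
      + (1 / 2) * dot3 (cross3 (F x) (G x)) (curl3 (fun y => cross3 (B y) (K y)) x))

def Xf (m : V3 → ℝ) (B F G K : V3 → V3) : V3 → V3 := fun y =>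
  (m y * dot3 (K y) (cross3 (F y) (G y))) • B y
  - (1 / 2 : ℝ) • (cross3 (m y • cross3 (F y) (G y)) (cross3 (B y) (K y))
      + cross3 (m y • cross3 (G y) (K y)) (cross3 (B y) (F y))
      + cross3 (m y • cross3 (K y) (F y)) (cross3 (B y) (G y)))

set_option maxHeartbeats 4000000 in
lemma key (m : V3 → ℝ) (B F G K : V3 → V3)
    (hm : Differentiable ℝ m) (hB : Differentiable ℝ B) (hF : Differentiable ℝ F)
    (hG : Differentiable ℝ G) (hK : Differentiable ℝ K) (x : V3) :
    itg m B F G K x + itg m B G K F x + itg m B K F G x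
      + m x * div3 B x * dot3 (K x) (cross3 (F x) (G x))
      = div3 (Xf m B F G K) x := by
  simp only [itg, Xf, div3, curl3, Fin.sum_univ_three, Matrix.cons_val_zero,
    Matrix.cons_val_one, Matrix.head_cons, Matrix.cons_val_two, Matrix.tail_cons,
    cross3_0, cross3_1, cross3_2, dot3_expand, Pi.smul_apply, Pi.sub_apply,
    Pi.add_apply, smul_eq_mul]
  simp (disch := fun_prop) only [pd_sub, pd_add, pd_mul, pd_neg, pd_const]
  ring

-- zero off the support of B
lemma cross3_zero_left (b : V3) : cross3 0 b = 0 := by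
  funext i; fin_cases i <;> simp [cross3_0, cross3_1, cross3_2]
lemma cross3_zero_right (a : V3) : cross3 a 0 = 0 := by
  funext i; fin_cases i <;> simp [cross3_0, cross3_1, cross3_2]
lemma dot3_zero_left (b : V3) : dot3 0 b = 0 := by simp [dot3_expand]
lemma dot3_zero_right (a : V3) : dot3 a 0 = 0 := by simp [dot3_expand]

lemma curlBcross_zero {B K : V3 → V3} {x : V3} (hx : x ∉ tsupport B) :
    curl3 (fun y => cross3 (B y) (K y)) x = 0 := by
  have h : ∀ (k : Fin 3) (i : Fin 3),
      pd i (fun y => cross3 (B y) (K y) k) x = 0 := fun k i =>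
    pd_zero_of_base (fun y hy => by rw [hy, cross3_zero_left]; rfl) hx i
  funext i; fin_cases i <;> simp [curl3, h]

lemma itg_zero (m : V3 → ℝ) (B F G K : V3 → V3) {x : V3} (hx : x ∉ tsupport B) :
    itg m B F G K x = 0 := by
  have hB0 : B x = 0 := image_eq_zero_of_notMem_tsupport hx
  rw [itg, hB0, curlBcross_zero hx, dot3_zero_left, dot3_zero_left, dot3_zero_right]
  ring

lemma div3_zero_of_base {X : V3 → V3} {B : V3 → V3} (h : ∀ y, B y = 0 → X y = 0)
    {x : V3} (hx : x ∉ tsupport B) : div3 X x = 0 := by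
  have : ∀ i : Fin 3, pd i (fun y => X y i) x = 0 := fun i =>
    pd_zero_of_base (fun y hy => by rw [h y hy]; rfl) hx i
  simp [div3, this]

lemma Xf_zero (m : V3 → ℝ) (B F G K : V3 → V3) {y : V3} (hy : B y = 0) :
    Xf m B F G K y = 0 := by
  simp [Xf, hy, cross3_zero_left, cross3_zero_right, smul_zero, dot3_zero_left]

-- divergence theorem consequence
set_option maxHeartbeats 1000000 in
lemma integral_div3_eq_zero (X : V3 → V3) (hX : ContDiff ℝ (⊤ : ℕ∞) X)
    (hXs : HasCompactSupport X) : ∫ x, div3 X x = 0 := by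
  obtain ⟨R, hR0, hsub⟩ := hXs.isBounded.subset_closedBall_lt 0 0
  set a : V3 := fun _ => -(R + 1) with ha
  set b : V3 := fun _ => (R + 1) with hb
  have habs : ∀ p : V3, p ∈ tsupport X → ∀ i, |p i| ≤ R := by
    intro p hp i
    have h1 : ‖p‖ ≤ R := mem_closedBall_zero_iff.mp (hsub hp)
    have h2 : |p i| ≤ ‖p‖ := by
      simpa [Real.norm_eq_abs] using norm_le_pi_norm p i
    linarith
  have hXz : ∀ p : V3, ∀ i : Fin 3, R < |p i| → X p = 0 := by
    intro p i hi
    apply image_eq_zero_of_notMem_tsupport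
    intro hmem
    exact absurd (habs p hmem i) (not_le.mpr hi)
  have hdiff : Differentiable ℝ X := hX.differentiable (by simp)
  have hdle : a ≤ b := fun i => by simp only [ha, hb]; linarith
  have hcont : Continuous fun x : V3 => ∑ i : Fin 3, fderiv ℝ X x (Pi.single i 1) i := by
    apply continuous_finset_sum
    intro i _
    have h1 : Continuous fun x : V3 => fderiv ℝ X x (Pi.single i 1) :=
      (hX.continuous_fderiv_apply (by simp)).comp (continuous_id.prodMk continuous_const)
    exact (continuous_apply i).comp h1
  have hdiv3 : ∀ x, div3 X x = ∑ i : Fin 3, fderiv ℝ X x (Pi.single i 1) i := by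
    intro x
    apply Finset.sum_congr rfl
    intro i _
    have hXd : HasFDerivAt X (fderiv ℝ X x) x := (hdiff x).hasFDerivAt
    have h := ((ContinuousLinearMap.proj i : V3 →L[ℝ] ℝ).hasFDerivAt.comp x hXd).fderiv
    rw [pd, show (fun y => X y i) = (⇑(ContinuousLinearMap.proj i : V3 →L[ℝ] ℝ) ∘ X) from rfl, h]
    rfl
  have h0 : ∫ x, div3 X x = ∫ x in Set.Icc a b, div3 X x := by
    refine (setIntegral_eq_integral_of_forall_compl_eq_zero ?_).symm
    intro x hx
    have hxT : x ∉ tsupport X := by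
      intro hmem
      apply hx
      rw [Set.mem_Icc]
      constructor <;> intro i <;> have := abs_le.mp (habs x hmem i) <;>
        simp only [ha, hb] <;> linarith [this.1, this.2]
    exact div3_zero_of_base (fun y hy => hy) hxT
  have hD := MeasureTheory.integral_divergence_of_hasFDerivAt_off_countable
      (n := 2) (a := a) (b := b) hdle X (fun x => fderiv ℝ X x) ∅ Set.countable_empty
      hX.continuous.continuousOn
      (fun x _ => (hdiff x).hasFDerivAt)
      (hcont.integrableOn_Icc)
  rw [h0]
  calc ∫ x in Set.Icc a b, div3 X x
      = ∫ x in Set.Icc a b, ∑ i : Fin 3, fderiv ℝ X x (Pi.single i 1) i := by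
        simp only [hdiv3]
    _ = 0 := by
        rw [hD, Finset.sum_eq_zero]
        intro i _
        have hbi : R < |b i| := by
          simp only [hb]; rw [abs_of_pos (by linarith)]; linarith
        have hai : R < |a i| := by
          simp only [ha]; rw [abs_neg, abs_of_pos (by linarith)]; linarith
        have hf : ∀ y : Fin 2 → ℝ, X (i.insertNth (b i) y) i = 0 := by
          intro y
          have h2 := hXz (i.insertNth (b i) y) i (by rw [Fin.insertNth_apply_same]; exact hbi)
          simp [h2]
        have hg : ∀ y : Fin 2 → ℝ, X (i.insertNth (a i) y) i = 0 := by
          intro y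
          have h2 := hXz (i.insertNth (a i) y) i (by rw [Fin.insertNth_apply_same]; exact hai)
          simp [h2]
        simp [hf, hg]

-- continuity lemmas
lemma continuous_itg (m : V3 → ℝ) (B F G K : V3 → V3)
    (hm : ContDiff ℝ (⊤ : ℕ∞) m) (hB : ContDiff ℝ (⊤ : ℕ∞) B)
    (hF : ContDiff ℝ (⊤ : ℕ∞) F) (hG : ContDiff ℝ (⊤ : ℕ∞) G)
    (hK : ContDiff ℝ (⊤ : ℕ∞) K) : Continuous (itg m B F G K) := by
  have hm' : Continuous m := hm.continuous
  have hB' : Continuous B := hB.continuous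
  have hF' : Continuous F := hF.continuous
  have hG' : Continuous G := hG.continuous
  have hK' : Continuous K := hK.continuous
  unfold itg div3 curl3
  simp only [Fin.sum_univ_three, Matrix.cons_val_zero, Matrix.cons_val_one,
    Matrix.head_cons, Matrix.cons_val_two, Matrix.tail_cons,
    cross3_0, cross3_1, cross3_2, dot3_expand]
  fun_prop

lemma continuous_R (m : V3 → ℝ) (B F G K : V3 → V3)
    (hm : ContDiff ℝ (⊤ : ℕ∞) m) (hB : ContDiff ℝ (⊤ : ℕ∞) B)
    (hF : ContDiff ℝ (⊤ : ℕ∞) F) (hG : ContDiff ℝ (⊤ : ℕ∞) G)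
    (hK : ContDiff ℝ (⊤ : ℕ∞) K) :
    Continuous (fun x => m x * div3 B x * dot3 (K x) (cross3 (F x) (G x))) := by
  have hm' : Continuous m := hm.continuous
  have hB' : Continuous B := hB.continuous
  have hF' : Continuous F := hF.continuous
  have hG' : Continuous G := hG.continuous
  have hK' : Continuous K := hK.continuous
  unfold div3
  simp only [Fin.sum_univ_three, cross3_0, cross3_1, cross3_2, dot3_expand]
  fun_prop

lemma contDiff_Xf (m : V3 → ℝ) (B F G K : V3 → V3)
    (hm : ContDiff ℝ (⊤ : ℕ∞) m) (hB : ContDiff ℝ (⊤ : ℕ∞) B)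
    (hF : ContDiff ℝ (⊤ : ℕ∞) F) (hG : ContDiff ℝ (⊤ : ℕ∞) G)
    (hK : ContDiff ℝ (⊤ : ℕ∞) K) : ContDiff ℝ (⊤ : ℕ∞) (Xf m B F G K) := by
  rw [contDiff_pi]
  have h0 : ContDiff ℝ (⊤ : ℕ∞) (fun y => Xf m B F G K y 0) := by
    simp only [Xf, Pi.sub_apply, Pi.add_apply, Pi.smul_apply, smul_eq_mul,
      cross3_0, cross3_1, cross3_2, dot3_expand]
    fun_prop
  have h1 : ContDiff ℝ (⊤ : ℕ∞) (fun y => Xf m B F G K y 1) := by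
    simp only [Xf, Pi.sub_apply, Pi.add_apply, Pi.smul_apply, smul_eq_mul,
      cross3_0, cross3_1, cross3_2, dot3_expand]
    fun_prop
  have h2 : ContDiff ℝ (⊤ : ℕ∞) (fun y => Xf m B F G K y 2) := by
    simp only [Xf, Pi.sub_apply, Pi.add_apply, Pi.smul_apply, smul_eq_mul,
      cross3_0, cross3_1, cross3_2, dot3_expand]
    fun_prop
  intro i
  fin_cases i
  exacts [h0, h1, h2]

lemma continuous_div3_Xf (m : V3 → ℝ) (B F G K : V3 → V3)
    (hm : ContDiff ℝ (⊤ : ℕ∞) m) (hB : ContDiff ℝ (⊤ : ℕ∞) B)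
    (hF : ContDiff ℝ (⊤ : ℕ∞) F) (hG : ContDiff ℝ (⊤ : ℕ∞) G)
    (hK : ContDiff ℝ (⊤ : ℕ∞) K) : Continuous (div3 (Xf m B F G K)) := by
  unfold div3
  simp only [Fin.sum_univ_three, Xf, Pi.sub_apply, Pi.add_apply, Pi.smul_apply,
    smul_eq_mul, cross3_0, cross3_1, cross3_2, dot3_expand]
  fun_prop


theorem fourth_term_identity' (n : V3 → ℝ) (hn : ContDiff ℝ (⊤ : ℕ∞) n)
    (hnpos : ∀ x, 0 < n x)
    (B F G K : V3 → V3)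
    (hB : ContDiff ℝ (⊤ : ℕ∞) B) (hF : ContDiff ℝ (⊤ : ℕ∞) F)
    (hG : ContDiff ℝ (⊤ : ℕ∞) G) (hK : ContDiff ℝ (⊤ : ℕ∞) K)
    (hBs : HasCompactSupport B) (hFs : HasCompactSupport F)
    (hGs : HasCompactSupport G) (hKs : HasCompactSupport K) :
    (∫ x, itg (fun x => 1 / (n x) ^ 2) B F G K x)
      + (∫ x, itg (fun x => 1 / (n x) ^ 2) B G K F x)
      + (∫ x, itg (fun x => 1 / (n x) ^ 2) B K F G x)
      = - ∫ x, (1 / (n x) ^ 2) * div3 B x * dot3 (K x) (cross3 (F x) (G x)) := by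
  have hmc : ContDiff ℝ (⊤ : ℕ∞) (fun x => 1 / (n x) ^ 2) :=
    ContDiff.div contDiff_const (hn.pow 2) (fun x => pow_ne_zero 2 (hnpos x).ne')
  set m : V3 → ℝ := fun x => 1 / (n x) ^ 2 with hmdef
  have hmd : Differentiable ℝ m := hmc.differentiable (by simp)
  have hBd : Differentiable ℝ B := hB.differentiable (by simp)
  have hFd : Differentiable ℝ F := hF.differentiable (by simp)
  have hGd : Differentiable ℝ G := hG.differentiable (by simp)
  have hKd : Differentiable ℝ K := hK.differentiable (by simp)
  have hI1s : HasCompactSupport (itg m B F G K) :=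
    HasCompactSupport.intro hBs (fun x hx => itg_zero m B F G K hx)
  have hI2s : HasCompactSupport (itg m B G K F) :=
    HasCompactSupport.intro hBs (fun x hx => itg_zero m B G K F hx)
  have hI3s : HasCompactSupport (itg m B K F G) :=
    HasCompactSupport.intro hBs (fun x hx => itg_zero m B K F G hx)
  have hRs : HasCompactSupport (fun x => m x * div3 B x * dot3 (K x) (cross3 (F x) (G x))) :=
    HasCompactSupport.intro hBs (fun x hx => by
      rw [div3_zero_of_base (fun y hy => hy) hx]; ring)
  have hI1 : Integrable (itg m B F G K) :=
    (continuous_itg m B F G K hmc hB hF hG hK).integrable_of_hasCompactSupport hI1s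
  have hI2 : Integrable (itg m B G K F) :=
    (continuous_itg m B G K F hmc hB hG hK hF).integrable_of_hasCompactSupport hI2s
  have hI3 : Integrable (itg m B K F G) :=
    (continuous_itg m B K F G hmc hB hK hF hG).integrable_of_hasCompactSupport hI3s
  have hR : Integrable (fun x => m x * div3 B x * dot3 (K x) (cross3 (F x) (G x))) :=
    (continuous_R m B F G K hmc hB hF hG hK).integrable_of_hasCompactSupport hRs
  have hXfs : HasCompactSupport (Xf m B F G K) :=
    HasCompactSupport.intro hBs
      (fun x hx => Xf_zero m B F G K (image_eq_zero_of_notMem_tsupport hx))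
  have hdXs : HasCompactSupport (div3 (Xf m B F G K)) :=
    HasCompactSupport.intro hBs (fun x hx =>
      div3_zero_of_base (fun y hy => Xf_zero m B F G K hy) hx)
  have hdX : Integrable (div3 (Xf m B F G K)) :=
    (continuous_div3_Xf m B F G K hmc hB hF hG hK).integrable_of_hasCompactSupport hdXs
  have hsum : ∫ x, (itg m B F G K x + itg m B G K F x + itg m B K F G x)
      = (∫ x, itg m B F G K x) + (∫ x, itg m B G K F x) + (∫ x, itg m B K F G x) := by
    have h' := integral_add (μ := volume) (hI1.add hI2) hI3
    simp only [Pi.add_apply] at h'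
    rw [integral_add hI1 hI2] at h'
    exact h' 
  have hcong : ∫ x, (itg m B F G K x + itg m B G K F x + itg m B K F G x)
      = ∫ x, (div3 (Xf m B F G K) x
          - m x * div3 B x * dot3 (K x) (cross3 (F x) (G x))) :=
    integral_congr_ae (Filter.Eventually.of_forall (fun x => by
      have h := key m B F G K hmd hBd hFd hGd hKd x
      show itg m B F G K x + itg m B G K F x + itg m B K F G x
        = div3 (Xf m B F G K) x - m x * div3 B x * dot3 (K x) (cross3 (F x) (G x))
      linarith))
  calc (∫ x, itg m B F G K x) + (∫ x, itg m B G K F x) + (∫ x, itg m B K F G x)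
      = ∫ x, (itg m B F G K x + itg m B G K F x + itg m B K F G x) := hsum.symm
    _ = ∫ x, (div3 (Xf m B F G K) x
          - m x * div3 B x * dot3 (K x) (cross3 (F x) (G x))) := hcong
    _ = (∫ x, div3 (Xf m B F G K) x)
          - ∫ x, m x * div3 B x * dot3 (K x) (cross3 (F x) (G x)) := integral_sub hdX hR
    _ = - ∫ x, m x * div3 B x * dot3 (K x) (cross3 (F x) (G x)) := by
        rw [integral_div3_eq_zero _ (contDiff_Xf m B F G K hmc hB hF hG hK) hXfs]; ring

end FourthTermAux

/-- The cyclic sum of the fourth-term integrals equals the div B obstruction. -/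
theorem fourth_term_identity (n : V3 → ℝ) (hn : ContDiff ℝ (⊤ : ℕ∞) n)
    (hnpos : ∀ x, 0 < n x)
    (B F G K : V3 → V3)
    (hB : ContDiff ℝ (⊤ : ℕ∞) B) (hF : ContDiff ℝ (⊤ : ℕ∞) F)
    (hG : ContDiff ℝ (⊤ : ℕ∞) G) (hK : ContDiff ℝ (⊤ : ℕ∞) K)
    (hBs : HasCompactSupport B) (hFs : HasCompactSupport F)
    (hGs : HasCompactSupport G) (hKs : HasCompactSupport K) :
    S16 n B F G K + S16 n B G K F + S16 n B K F G
      = - ∫ x, (1 / (n x) ^ 2) * div3 B x * dot3 (K x) (cross3 (F x) (G x)) := by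
  exact fourth_term_identity' n hn hnpos B F G K hB hF hG hK hBs hFs hGs hKs
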